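/- Under the same setup, with β := −H(r⁰)/(r⁰ − f*) ∈ (0,1], the updates satisfy r^{k+1} − f* ≤ (1 − β/(2θ²))(r^k − f*) for all k, and consequently 0 ≤ r^k − f* ≤ (1 − β/(2θ²))^k (r⁰ − f*). -/

import Mathlib

/-- Geometric decrease of the gap: `r^{k+1} − f* ≤ (1 − β/(2θ²))(r^k − f*)` and hence
`0 ≤ r^k − f* ≤ (1 − β/(2θ²))^k (r⁰ − f*)`. -/
theorem levelSet_update_geometric_decrease
    (H : ℝ → ℝ) (fstar r0 θ β : ℝ) (r U : ℕ → ℝ)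
    (hHconv : ConvexOn ℝ Set.univ H) (hHanti : Antitone H)
    (hHzero : H fstar = 0)
    (hβdef : β = -H r0 / (r0 - fstar)) (hβpos : 0 < β) (hβle : β ≤ 1)
    (hratio : ∀ s ∈ Set.Ioc fstar r0, H s / (s - fstar) ≥ H r0 / (r0 - fstar))
    (hθ : 1 < θ) (hr0 : fstar < r0) (hrinit : r 0 = r0)
    (hupd : ∀ k : ℕ, r (k + 1) = r k + U k / (2 * θ))
    (hsand : ∀ k : ℕ, θ * U k ≤ H (r k) ∧ H (r k) ≤ U k / θ)
    (hpos : ∀ k : ℕ, fstar < r k) :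
    (∀ k : ℕ, r (k + 1) - fstar ≤ (1 - β / (2 * θ ^ 2)) * (r k - fstar)) ∧
      (∀ k : ℕ, 0 ≤ r k - fstar ∧ r k - fstar ≤ (1 - β / (2 * θ ^ 2)) ^ k * (r0 - fstar)) := by
  have hθ0 : (0:ℝ) < θ := by linarith
  have hne : r0 - fstar ≠ 0 := by intro h; linarith [hr0, sub_eq_zero.mp h]
  have hsub : (0:ℝ) < r0 - fstar := by linarith
  have hHr0 : H r0 = -β * (r0 - fstar) := by
    rw [hβdef]; field_simp
  -- chord bound from convexity
  have hchord : ∀ s, fstar < s → s ≤ r0 → H s ≤ -β * (s - fstar) := by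
    intro s hs1 hs2
    rcases eq_or_lt_of_le hs2 with heq | hlt
    · rw [heq, hHr0]
    · set a : ℝ := (r0 - s) / (r0 - fstar) with ha_def
      set b : ℝ := (s - fstar) / (r0 - fstar) with hb_def
      have ha : 0 ≤ a := div_nonneg (by linarith) (by linarith)
      have hb : 0 ≤ b := div_nonneg (by linarith) (by linarith)
      have hab : a + b = 1 := by
          rw [ha_def, hb_def, ← add_div, div_eq_one_iff_eq hne]; ring
      have hcomb : a • fstar + b • r0 = s := by
        simp only [smul_eq_mul, ha_def, hb_def]; field_simp; ring
      have := hHconv.2 (Set.mem_univ fstar) (Set.mem_univ r0) ha hb hab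
      rw [hcomb] at this
      simp only [smul_eq_mul, hHzero, hHr0] at this
      calc H s ≤ a * 0 + b * (-β * (r0 - fstar)) := this
        _ = -β * (s - fstar) := by
            have hb' : b * (r0 - fstar) = s - fstar := (by rw [hb_def]; exact div_mul_cancel₀ _ hne)
            linear_combination (-β) * hb'
  have hHneg : ∀ k, H (r k) ≤ 0 := by
    intro k
    have := hHanti (le_of_lt (hpos k))
    rwa [hHzero] at this
  have hU : ∀ k, U k ≤ 0 := by
    intro k
    have h1 := (hsand k).1
    have h2 := hHneg k
    nlinarith
  have hle : ∀ k, r k ≤ r0 := by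
    intro k
    induction k with
    | zero => rw [hrinit]
    | succ n ih =>
      rw [hupd n]
      have := hU n
      have : U n / (2 * θ) ≤ 0 := div_nonpos_of_nonpos_of_nonneg this (by positivity)
      linarith
  have hstep : ∀ k : ℕ, r (k + 1) - fstar ≤ (1 - β / (2 * θ ^ 2)) * (r k - fstar) := by
    intro k
    have h1 := (hsand k).1
    have hc := hchord (r k) (hpos k) (hle k)
    have key : θ * U k ≤ -β * (r k - fstar) := le_trans h1 hc
    have h2θ : (0:ℝ) < 2 * θ := by linarith
    have hdiv : U k / (2 * θ) ≤ -β * (r k - fstar) / (2 * θ ^ 2) := by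
      rw [div_le_div_iff₀ (by positivity) (by positivity)]
      nlinarith [mul_le_mul_of_nonneg_right key (le_of_lt h2θ)]
    have expand : (1 - β / (2 * θ ^ 2)) * (r k - fstar)
        = (r k - fstar) + -β * (r k - fstar) / (2 * θ ^ 2) := by ring
    rw [hupd k, expand]
    linarith
  have hcpos : 0 ≤ 1 - β / (2 * θ ^ 2) := by
    have h1 : β / (2 * θ ^ 2) ≤ 1 := by
      rw [div_le_one (by positivity)]
      nlinarith
    linarith
  refine ⟨hstep, fun k => ?_⟩
  induction k with
  | zero =>
    refine ⟨by linarith [hpos 0], ?_⟩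
    rw [pow_zero, one_mul, hrinit]
  | succ n ih =>
    refine ⟨by linarith [hpos (n + 1)], ?_⟩
    calc r (n + 1) - fstar ≤ (1 - β / (2 * θ ^ 2)) * (r n - fstar) := hstep n
      _ ≤ (1 - β / (2 * θ ^ 2)) * ((1 - β / (2 * θ ^ 2)) ^ n * (r0 - fstar)) :=
          mul_le_mul_of_nonneg_left ih.2 hcpos
      _ = (1 - β / (2 * θ ^ 2)) ^ (n + 1) * (r0 - fstar) := by ring
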